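/- Li-Yorke chaos is not preserved under topological conjugacy: there exist metric spaces X and Y, homeomorphisms f : X → X and g : Y → Y, and a homeomorphism h : X → Y with h ∘ f = g ∘ h, such that f is Li-Yorke chaotic but g is not Li-Yorke chaotic. (One may take X the open unit disk 𝔻 ⊆ ℂ and Y = ℂ.) -/

import Mathlib

/-- `{x, y}` is a Li-Yorke chaotic pair for `T` if the distances between the iterates
`Tⁿ x` and `Tⁿ y` have positive limsup and zero liminf. -/
def LiYorkePair {X : Type*} [PseudoEMetricSpace X] (T : X → X) (x y : X) : Prop :=
  0 < Filter.limsup (fun n : ℕ => edist (T^[n] x) (T^[n] y)) Filter.atTop ∧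
    Filter.liminf (fun n : ℕ => edist (T^[n] x) (T^[n] y)) Filter.atTop = 0

/-- `T` is Li-Yorke chaotic if there is an uncountable set all of whose pairs of distinct
points are Li-Yorke chaotic pairs for `T`. -/
def LiYorkeChaotic {X : Type*} [PseudoEMetricSpace X] (T : X → X) : Prop :=
  ∃ Γ : Set X, ¬ Γ.Countable ∧ ∀ x ∈ Γ, ∀ y ∈ Γ, x ≠ y → LiYorkePair T x y

open Real Filter Set Topology

noncomputable def myPsi (x : ℝ) : ℝ := (max 0 (Real.sin (Real.pi * x / 2)))^2

noncomputable def myPhi (x : ℝ) : ℝ × ℝ := (myPsi x, Real.exp (-x))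

lemma myPhi_injective : Function.Injective myPhi := by
  intro a b h
  have h2 : Real.exp (-a) = Real.exp (-b) := congrArg Prod.snd h
  have := Real.exp_injective h2
  linarith

lemma myPhi_continuous : Continuous myPhi := by
  unfold myPhi myPsi
  fun_prop

lemma myPhi_isEmbedding : IsEmbedding myPhi := by
  refine ⟨?_, myPhi_injective⟩
  have hsnd : (fun x : ℝ => Real.exp (-x)) = Prod.snd ∘ myPhi := rfl
  have hind : IsInducing (fun x : ℝ => Real.exp (-x)) := by
    have : (fun x : ℝ => Real.exp (-x)) = Real.exp ∘ (fun x : ℝ => -x) := rfl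
    rw [this]
    exact (Real.isOpenEmbedding_exp.isEmbedding.comp (Homeomorph.neg ℝ).isEmbedding).isInducing
  exact IsInducing.of_comp myPhi_continuous continuous_snd (hsnd ▸ hind)

lemma myPsi_even (t : ℝ) (ht : t ∈ Set.Ioo (0:ℝ) 1) (k : ℕ) :
    myPsi (t + (4*k : ℕ)) = Real.sin (Real.pi * t / 2) ^ 2 := by
  have harg : Real.pi * (t + (4*k : ℕ)) / 2 = Real.pi * t / 2 + (k : ℕ) * (2 * Real.pi) := by
    push_cast; ring
  have hsin : Real.sin (Real.pi * (t + (4*k : ℕ)) / 2) = Real.sin (Real.pi * t / 2) := by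
    rw [harg, Real.sin_add_nat_mul_two_pi]
  have hnn : 0 ≤ Real.sin (Real.pi * t / 2) := by
    apply Real.sin_nonneg_of_nonneg_of_le_pi
    · nlinarith [ht.1, Real.pi_pos]
    · nlinarith [ht.2, Real.pi_pos]
  unfold myPsi
  rw [hsin, max_eq_right hnn]

lemma myPsi_odd (t : ℝ) (ht : t ∈ Set.Ioo (0:ℝ) 1) (k : ℕ) :
    myPsi (t + (4*k+2 : ℕ)) = 0 := by
  have harg : Real.pi * (t + (4*k+2 : ℕ)) / 2
      = (Real.pi * t / 2 + Real.pi) + (k : ℕ) * (2 * Real.pi) := by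
    push_cast; ring
  have hsin : Real.sin (Real.pi * (t + (4*k+2 : ℕ)) / 2) = - Real.sin (Real.pi * t / 2) := by
    rw [harg, Real.sin_add_nat_mul_two_pi, Real.sin_add_pi]
  have hnn : 0 ≤ Real.sin (Real.pi * t / 2) := by
    apply Real.sin_nonneg_of_nonneg_of_le_pi
    · nlinarith [ht.1, Real.pi_pos]
    · nlinarith [ht.2, Real.pi_pos]
  unfold myPsi
  rw [hsin, max_eq_left (by linarith), zero_pow (by norm_num)]

/-- The underlying "chaotic" space: the image of `myPhi` inside `ℝ × ℝ`. -/
abbrev myX : Type := ↥(Set.range myPhi)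

noncomputable def myH : myX ≃ₜ ℝ := myPhi_isEmbedding.toHomeomorph.symm

noncomputable def myG : ℝ ≃ₜ ℝ := Homeomorph.addRight (1:ℝ)

noncomputable def myF : myX ≃ₜ myX := myH.trans (myG.trans myH.symm)

lemma myG_iter (n : ℕ) (x : ℝ) : (⇑myG)^[n] x = x + n := by
  induction n with
  | zero => simp
  | succ n ih =>
      rw [Function.iterate_succ_apply', ih]
      show (x + n) + 1 = x + (n+1 : ℕ)
      push_cast; ring

lemma myF_iter (n : ℕ) (x : myX) : (⇑myF)^[n] x = myH.symm ((⇑myG)^[n] (myH x)) := by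
  induction n with
  | zero => simp
  | succ n ih =>
      rw [Function.iterate_succ_apply', ih, Function.iterate_succ_apply']
      show myH.symm (myG (myH (myH.symm _))) = _
      rw [Homeomorph.apply_symm_apply]

lemma myH_symm_val (t : ℝ) : ((myH.symm t : myX) : ℝ × ℝ) = myPhi t := rfl

theorem stmt_19 :
    ∃ (X Y : Type) (_ : MetricSpace X) (_ : MetricSpace Y)
      (f : X ≃ₜ X) (g : Y ≃ₜ Y) (h : X ≃ₜ Y),
      (⇑h ∘ ⇑f = ⇑g ∘ ⇑h) ∧ LiYorkeChaotic (⇑f) ∧ ¬ LiYorkeChaotic (⇑g) := by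
  refine ⟨myX, ℝ, inferInstance, inferInstance, myF, myG, myH, ?_, ?_, ?_⟩
  · funext x
    show myH (myH.symm (myG (myH x))) = myG (myH x)
    rw [Homeomorph.apply_symm_apply]
  · -- myF is Li-Yorke chaotic
    refine ⟨⇑myH ⁻¹' (Set.Ioo 0 1), ?_, ?_⟩
    · intro hc
      have himg : (⇑myH '' (⇑myH ⁻¹' (Set.Ioo 0 1))) = Set.Ioo (0:ℝ) 1 :=
        Set.image_preimage_eq _ myH.surjective
      have : (Set.Ioo (0:ℝ) 1).Countable := himg ▸ hc.image _
      have hcard := Cardinal.mk_Ioo_real (show (0:ℝ) < 1 by norm_num)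
      rw [← Set.countable_coe_iff, ← Cardinal.mk_le_aleph0_iff, hcard] at this
      exact absurd this (not_le.mpr Cardinal.aleph0_lt_continuum)
    · intro x hx y hy hxy
      set t := myH x with htdef
      set s := myH y with hsdef
      have ht : t ∈ Set.Ioo (0:ℝ) 1 := hx
      have hs : s ∈ Set.Ioo (0:ℝ) 1 := hy
      have hts : t ≠ s := fun h => hxy (myH.injective h)
      -- the distance sequence
      have hE : ∀ n : ℕ, edist ((⇑myF)^[n] x) ((⇑myF)^[n] y)
          = edist (myPhi (t + n)) (myPhi (s + n)) := by
        intro n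
        rw [myF_iter, myF_iter, ← htdef, ← hsdef, myG_iter, myG_iter]
        rw [Subtype.edist_eq, myH_symm_val, myH_symm_val]
      have hsin_ne : Real.sin (Real.pi * t / 2) ^ 2 ≠ Real.sin (Real.pi * s / 2) ^ 2 := by
        intro h
        have hmem : ∀ u : ℝ, u ∈ Set.Ioo (0:ℝ) 1 →
            Real.pi * u / 2 ∈ Set.Icc (-(Real.pi/2)) (Real.pi/2) := by
          intro u hu
          constructor
          · nlinarith [Real.pi_pos, hu.1]
          · nlinarith [Real.pi_pos, hu.2]
        have hnn : ∀ u : ℝ, u ∈ Set.Ioo (0:ℝ) 1 → 0 ≤ Real.sin (Real.pi * u / 2) := by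
          intro u hu
          apply Real.sin_nonneg_of_nonneg_of_le_pi
          · nlinarith [hu.1, Real.pi_pos]
          · nlinarith [hu.2, Real.pi_pos]
        have h1 := hnn t ht
        have h2 := hnn s hs
        have heq : Real.sin (Real.pi * t / 2) = Real.sin (Real.pi * s / 2) := by nlinarith
        have harg := Real.strictMonoOn_sin.injOn (hmem t ht) (hmem s hs) heq
        have h3 : Real.pi * t = Real.pi * s := by linarith
        exact hts (mul_left_cancel₀ Real.pi_ne_zero h3)
      set c : ENNReal := edist (Real.sin (Real.pi * t / 2) ^ 2) (Real.sin (Real.pi * s / 2) ^ 2)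
        with hcdef
      have hcpos : 0 < c := edist_pos.mpr hsin_ne
      have hphi4 : Tendsto (fun k : ℕ => 4*k) atTop atTop := by
        apply StrictMono.tendsto_atTop
        intro a b hab; dsimp only; omega
      have hphi42 : Tendsto (fun k : ℕ => 4*k+2) atTop atTop := by
        apply StrictMono.tendsto_atTop
        intro a b hab; dsimp only; omega
      constructor
      · -- limsup positive
        refine lt_of_lt_of_le hcpos (Filter.le_limsup_of_frequently_le' ?_)
        refine hphi4.frequently (Filter.Frequently.of_forall ?_)
        intro k
        rw [hE, Prod.edist_eq]
        have h1 : (myPhi (t + (4*k : ℕ))).1 = Real.sin (Real.pi * t / 2) ^ 2 := myPsi_even t ht k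
        have h2 : (myPhi (s + (4*k : ℕ))).1 = Real.sin (Real.pi * s / 2) ^ 2 := myPsi_even s hs k
        rw [h1, h2, ← hcdef]
        exact le_max_left _ _
      · -- liminf zero
        have hzero : ∀ k : ℕ, edist ((⇑myF)^[4*k+2] x) ((⇑myF)^[4*k+2] y)
            = ENNReal.ofReal
                (dist (Real.exp (-(t + ((4*k+2:ℕ):ℝ)))) (Real.exp (-(s + ((4*k+2:ℕ):ℝ))))) := by
          intro k
          rw [hE, Prod.edist_eq]
          have h1 : (myPhi (t + (4*k+2 : ℕ))).1 = 0 := myPsi_odd t ht k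
          have h2 : (myPhi (s + (4*k+2 : ℕ))).1 = 0 := myPsi_odd s hs k
          rw [h1, h2, edist_self, max_eq_right zero_le]
          exact edist_dist _ _
        have hexp : ∀ u : ℝ,
            Tendsto (fun k : ℕ => Real.exp (-(u + ((4*k+2:ℕ):ℝ)))) atTop (𝓝 0) := by
          intro u
          apply Real.tendsto_exp_atBot.comp
          rw [tendsto_neg_atBot_iff]
          exact tendsto_atTop_add_const_left _ u (tendsto_natCast_atTop_atTop.comp hphi42)
        have hd := (hexp t).dist (hexp s)
        rw [dist_self] at hd
        have htend : Tendsto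
            (fun k : ℕ => edist ((⇑myF)^[4*k+2] x) ((⇑myF)^[4*k+2] y)) atTop (𝓝 0) := by
          have := ENNReal.tendsto_ofReal (a := 0) hd
          rw [ENNReal.ofReal_zero] at this
          refine this.congr fun k => (hzero k).symm
        have hle : Filter.liminf (fun n : ℕ => edist ((⇑myF)^[n] x) ((⇑myF)^[n] y)) atTop
            ≤ Filter.liminf
              ((fun n : ℕ => edist ((⇑myF)^[n] x) ((⇑myF)^[n] y)) ∘ fun k => 4*k+2) atTop := by
          rw [Filter.liminf_comp]
          exact Filter.liminf_le_liminf_of_le hphi42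
        refine le_antisymm (hle.trans ?_) zero_le
        exact le_of_eq htend.liminf_eq
  · -- translation on ℝ is not Li-Yorke chaotic
    rintro ⟨Γ, hΓ, hpair⟩
    have hnsub : ¬ Γ.Subsingleton := fun h => hΓ h.countable
    rw [Set.not_subsingleton_iff] at hnsub
    obtain ⟨x, hx, y, hy, hxy⟩ := hnsub
    have := (hpair x hx y hy hxy).2
    have hconst : (fun n : ℕ => edist ((⇑myG)^[n] x) ((⇑myG)^[n] y))
        = fun _ : ℕ => edist x y := by
      funext n
      rw [myG_iter, myG_iter, edist_dist, edist_dist, Real.dist_eq, Real.dist_eq]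
      ring_nf
    rw [hconst, Filter.liminf_const] at this
    exact hxy (edist_eq_zero.mp this)
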